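/- Let Σ be a 2n×2n real symmetric positive definite matrix with eigenemittances ε₁,...,ε_n and projected emittances ε̃₁,...,ε̃_n. Then ε̃₁·ε̃₂·...·ε̃_n ≥ ε₁·ε₂·...·ε_n, i.e., the product of the projected emittances is at least √det(Σ). -/

import Mathlib

open Matrix Polynomial

noncomputable section

/-- The 2×2 standard symplectic matrix. -/
def J2 : Matrix (Fin 2) (Fin 2) ℝ := !![0, 1; -1, 0]

/-- The 2n×2n block-diagonal symplectic matrix `diag(J₂, ..., J₂)`. -/
def Jblock (n : ℕ) : Matrix (Fin (2 * n)) (Fin (2 * n)) ℝ :=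
  fun i j =>
    if i.val / 2 = j.val / 2 then
      J2 ⟨i.val % 2, by omega⟩ ⟨j.val % 2, by omega⟩
    else 0

/-- The 2×2 block of a 2n×2n matrix at block position (m, k). -/
def blk {n : ℕ} (A : Matrix (Fin (2 * n)) (Fin (2 * n)) ℝ) (m k : Fin n) :
    Matrix (Fin 2) (Fin 2) ℝ :=
  fun i j =>
    A ⟨2 * m.val + i.val, by have := m.isLt; have := i.isLt; omega⟩
      ⟨2 * k.val + j.val, by have := k.isLt; have := j.isLt; omega⟩

/-- `S` has eigenemittances `ε`: the spectrum of `S · J_{2n}` (over ℂ, with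
multiplicity) is `±iε₁, ..., ±iε_n`. -/
def hasEigenemittances {n : ℕ} (S : Matrix (Fin (2 * n)) (Fin (2 * n)) ℝ)
    (ε : Fin n → ℝ) : Prop :=
  ((S * Jblock n).map (Complex.ofReal)).charpoly =
    ∏ m : Fin n, ((X - C (Complex.I * (ε m : ℂ))) * (X + C (Complex.I * (ε m : ℂ))))

section Aux

set_option linter.unusedSectionVars false
set_option linter.unreachableTactic false
set_option linter.unusedTactic false

variable {m k : Type*} [Fintype m] [DecidableEq m] [Fintype k] [DecidableEq k]

lemma one_le_det_one_add' {M : Matrix k k ℝ} (hM : M.PosSemidef) : 1 ≤ (1 + M).det := by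
  have h1 : (1 + M).IsHermitian := Matrix.isHermitian_one.add hM.1
  rw [h1.det_eq_prod_eigenvalues]
  have : ∀ i, 1 ≤ h1.eigenvalues i := by
    intro i
    rw [h1.eigenvalues_eq i]
    set v := (WithLp.equiv 2 (k → ℝ)) (h1.eigenvectorBasis i) with hv
    have hnorm : star v ⬝ᵥ v = 1 := by
      have h2 := h1.eigenvectorBasis.orthonormal.1 i
      have := EuclideanSpace.inner_eq_star_dotProduct (𝕜 := ℝ)
        (h1.eigenvectorBasis i) (h1.eigenvectorBasis i)
      rw [real_inner_self_eq_norm_sq, h2] at this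
      simpa [hv] using this.symm
    change 1 ≤ RCLike.re (star v ⬝ᵥ (1 + M) *ᵥ v)
    rw [add_mulVec, one_mulVec, dotProduct_add, hnorm]
    have := hM.re_dotProduct_nonneg v
    simp only [RCLike.re_to_real] at this ⊢
    linarith
  calc (1:ℝ) = ∏ _i : k, 1 := by simp
  _ ≤ ∏ i, h1.eigenvalues i := Finset.prod_le_prod (by simp) (by simpa using this)

open scoped MatrixOrder in
lemma det_le_det_add' {P N : Matrix k k ℝ} (hP : P.PosDef) (hN : N.PosSemidef) :
    P.det ≤ (P + N).det := by
  have : Invertible P := invertibleOfIsUnitDet P hP.det_pos.ne'.isUnit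
  have hPinv : P⁻¹.PosDef := hP.inv
  set Q := CFC.sqrt P⁻¹ with hQ
  have hQQ : Q * Q = P⁻¹ := CFC.sqrt_mul_sqrt_self P⁻¹ hPinv.posSemidef.nonneg
  have key : P + N = P * (1 + Q * (Q * N)) := by
    rw [Matrix.mul_add, Matrix.mul_one]
    congr 1
    rw [← Matrix.mul_assoc, ← Matrix.mul_assoc, Matrix.mul_assoc P Q Q, hQQ,
      Matrix.mul_nonsing_inv _ hP.det_pos.ne'.isUnit, Matrix.one_mul]
  rw [key, det_mul]
  have h2 : (1 + Q * (Q * N)).det = (1 + Q * N * Q).det := by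
    rw [det_one_add_mul_comm, Matrix.mul_assoc]
  have h3 : (Q * N * Q).PosSemidef := by
    have := hN.conjTranspose_mul_mul_same Q
    rwa [show Qᴴ = Q from (CFC.sqrt_nonneg P⁻¹).posSemidef.1] at this
  nlinarith [one_le_det_one_add' h3, hP.det_pos, det_one_add_mul_comm Q (Q*N)]

lemma posDef_submatrix_equiv' {M : Matrix k k ℝ} (hM : M.PosDef) (e : m ≃ k) :
    (M.submatrix e e).PosDef := by
  rw [posDef_iff_dotProduct_mulVec] at hM ⊢
  refine ⟨hM.1.submatrix _, ?_⟩
  intro x hx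
  have hx' : (x ∘ e.symm) ≠ 0 := by
    intro h
    apply hx
    funext i
    have := congrFun h (e i)
    simpa using this
  have h2 := hM.2 hx'
  rw [Matrix.submatrix_mulVec_equiv]
  have h3 : star x ⬝ᵥ ((M *ᵥ (x ∘ ⇑e.symm)) ∘ ⇑e) = star (x ∘ ⇑e.symm) ⬝ᵥ (M *ᵥ (x ∘ ⇑e.symm)) := by
    simp only [dotProduct, Function.comp_apply, Pi.star_apply]
    refine Fintype.sum_equiv e _ _ fun i => ?_
    simp
  rw [h3]; exact h2

lemma posDef_toBlocks₁₁' {A : Matrix m m ℝ} {B : Matrix m k ℝ} {C : Matrix k m ℝ}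
    {D : Matrix k k ℝ} (h : (fromBlocks A B C D).PosDef) : A.PosDef := by
  rw [posDef_iff_dotProduct_mulVec] at h ⊢
  constructor
  · have := h.1
    have h11 := congrArg Matrix.toBlocks₁₁ this
    exact this.submatrix Sum.inl
  · intro x hx
    have hx' : (Sum.elim x (0 : k → ℝ)) ≠ 0 := by
      intro hcon
      exact hx (funext fun i => congrFun hcon (Sum.inl i))
    have h2 := h.2 hx'
    rw [fromBlocks_mulVec] at h2
    simpa using h2

lemma posDef_toBlocks₂₂' {A : Matrix m m ℝ} {B : Matrix m k ℝ} {C : Matrix k m ℝ}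
    {D : Matrix k k ℝ} (h : (fromBlocks A B C D).PosDef) : D.PosDef := by
  rw [posDef_iff_dotProduct_mulVec] at h ⊢
  constructor
  · have := h.1
    exact this.submatrix Sum.inr
  · intro x hx
    have hx' : (Sum.elim (0 : m → ℝ) x) ≠ 0 := by
      intro hcon
      exact hx (funext fun i => congrFun hcon (Sum.inr i))
    have h2 := h.2 hx'
    rw [fromBlocks_mulVec] at h2
    simpa using h2

lemma psd_posDef_of_det_ne_zero' {M : Matrix k k ℝ} (hM : M.PosSemidef) (h : M.det ≠ 0) :
    M.PosDef := by
  rw [posDef_iff_dotProduct_mulVec]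
  refine ⟨hM.1, fun x hx => ?_⟩
  have h0 : star x ⬝ᵥ M *ᵥ x ≠ 0 := by
    intro hc
    have hker := (hM.dotProduct_mulVec_zero_iff x).mp hc
    exact h ((Matrix.exists_mulVec_eq_zero_iff).mp ⟨x, hx, hker⟩)
  exact lt_of_le_of_ne (hM.dotProduct_mulVec_nonneg x) (Ne.symm h0)

lemma psd_det_nonneg' {M : Matrix k k ℝ} (hM : M.PosSemidef) : 0 ≤ M.det := by
  rw [hM.1.det_eq_prod_eigenvalues]
  exact Finset.prod_nonneg fun i _ => by exact_mod_cast hM.eigenvalues_nonneg i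

lemma fischer_step' {A : Matrix m m ℝ} {B : Matrix m k ℝ} {C : Matrix k m ℝ}
    {D : Matrix k k ℝ} (h : (fromBlocks A B C D).PosDef) :
    (fromBlocks A B C D).det ≤ A.det * D.det := by
  have hA : A.PosDef := posDef_toBlocks₁₁' h
  have : Invertible A := invertibleOfIsUnitDet A hA.det_pos.ne'.isUnit
  have hC : C = Bᴴ := by
    have h1 := h.1
    funext i j
    have h2 := congrFun (congrFun h1 (Sum.inr i)) (Sum.inl j)
    simpa using h2.symm
  subst hC
  have hschur : (D - Bᴴ * A⁻¹ * B).PosSemidef :=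
    (Matrix.PosDef.fromBlocks₁₁ B D hA).mp h.posSemidef
  have hN : (Bᴴ * A⁻¹ * B).PosSemidef := hA.inv.posSemidef.conjTranspose_mul_mul_same B
  have hdet : (fromBlocks A B Bᴴ D).det = A.det * (D - Bᴴ * A⁻¹ * B).det := by
    rw [Matrix.det_fromBlocks₁₁]
    congr 3
    rw [Matrix.invOf_eq_nonsing_inv]
  have hschurdet : (D - Bᴴ * A⁻¹ * B).det ≠ 0 := by
    intro hc
    have := h.det_pos
    rw [hdet, hc, mul_zero] at this
    exact lt_irrefl _ this
  have hschurPD := psd_posDef_of_det_ne_zero' hschur hschurdet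
  have hle : (D - Bᴴ * A⁻¹ * B).det ≤ D.det := by
    have := det_le_det_add' hschurPD hN
    rwa [sub_add_cancel] at this
  rw [hdet]
  exact mul_le_mul_of_nonneg_left hle hA.det_pos.le

lemma fischer' : ∀ (n : ℕ) (S : Matrix (Fin (2*n)) (Fin (2*n)) ℝ), S.PosDef →
    S.det ≤ ∏ m : Fin n, (blk S m m).det := by
  intro n
  induction n with
  | zero =>
    intro S _
    simp [Matrix.det_isEmpty]
  | succ n IH =>
    intro S hS
    set e : Fin 2 ⊕ Fin (2*n) ≃ Fin (2*(n+1)) :=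
      finSumFinEquiv.trans (finCongr (by ring)) with he
    set S' := S.submatrix e e with hS'def
    have hS' : S'.PosDef := posDef_submatrix_equiv' hS e
    have hS'' : (fromBlocks (S'.toBlocks₁₁) (S'.toBlocks₁₂) (S'.toBlocks₂₁)
        (S'.toBlocks₂₂)).PosDef := by
      rwa [fromBlocks_toBlocks]
    have hdet : S.det = S'.det := (det_submatrix_equiv_self e S).symm
    have h1 : S'.det ≤ (S'.toBlocks₁₁).det * (S'.toBlocks₂₂).det := by
      conv_lhs => rw [← fromBlocks_toBlocks S']
      exact fischer_step' hS''
    have hA : (S'.toBlocks₁₁).PosDef := posDef_toBlocks₁₁' hS''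
    have hD : (S'.toBlocks₂₂).PosDef := posDef_toBlocks₂₂' hS''
    have hIH := IH _ hD
    have hblk0 : S'.toBlocks₁₁ = blk S 0 0 := by
      funext i j
      simp only [Matrix.toBlocks₁₁, blk, hS'def, Matrix.submatrix_apply, Matrix.of_apply]
      congr 1 <;> apply Fin.ext <;>
        simp [he, finSumFinEquiv, Fin.castAdd, Fin.castLE]
    have hblkS : ∀ m : Fin n, blk (S'.toBlocks₂₂) m m = blk S m.succ m.succ := by
      intro m
      funext i j
      simp only [Matrix.toBlocks₂₂, blk, hS'def, Matrix.submatrix_apply, Matrix.of_apply]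
      congr 1 <;> apply Fin.ext <;>
        simp [he, finSumFinEquiv, Fin.natAdd, Fin.succ] <;> omega
    rw [Fin.prod_univ_succ]
    calc S.det = S'.det := hdet
    _ ≤ (S'.toBlocks₁₁).det * (S'.toBlocks₂₂).det := h1
    _ ≤ (S'.toBlocks₁₁).det * ∏ m : Fin n, (blk (S'.toBlocks₂₂) m m).det :=
        mul_le_mul_of_nonneg_left hIH hA.det_pos.le
    _ = (blk S 0 0).det * ∏ m : Fin n, (blk S m.succ m.succ).det := by
        rw [hblk0]
        congr 1
        exact Finset.prod_congr rfl fun m _ => by rw [hblkS m]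

def e2n (n : ℕ) : Fin 2 × Fin n ≃ Fin (2 * n) :=
  (Equiv.prodComm _ _).trans (finProdFinEquiv.trans (finCongr (by ring)))

lemma Jblock_eq (n : ℕ) :
    Jblock n = (blockDiagonal (fun _ : Fin n => J2)).submatrix (e2n n).symm (e2n n).symm := by
  funext a b
  simp only [Jblock, Matrix.submatrix_apply, Matrix.blockDiagonal_apply]
  have h1 : ∀ c : Fin (2*n), ((e2n n).symm c).1.val = c.val % 2 ∧
      ((e2n n).symm c).2.val = c.val / 2 := by
    intro c
    simp [e2n, finProdFinEquiv, Fin.modNat, Fin.divNat]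
  rcases h1 a with ⟨ha1, ha2⟩
  rcases h1 b with ⟨hb1, hb2⟩
  by_cases h : a.val / 2 = b.val / 2
  · rw [if_pos h, if_pos (by apply Fin.ext; rw [ha2, hb2, h])]
    congr 1 <;> apply Fin.ext <;> simp [ha1, hb1]
  · rw [if_neg h, if_neg (by intro hc; exact h (by rw [← ha2, ← hb2, hc]))]

lemma det_Jblock (n : ℕ) : (Jblock n).det = 1 := by
  rw [Jblock_eq, det_submatrix_equiv_self, Matrix.det_blockDiagonal]
  have : J2.det = 1 := by simp [J2, Matrix.det_fin_two]
  simp [this]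

lemma det_eq_of_eigen {n : ℕ} {S : Matrix (Fin (2 * n)) (Fin (2 * n)) ℝ} {ε : Fin n → ℝ}
    (hε : hasEigenemittances S ε) : S.det = ∏ m : Fin n, (ε m) ^ 2 := by
  have h1 := Matrix.det_eq_sign_charpoly_coeff ((S * Jblock n).map (Complex.ofReal))
  rw [hε, Fintype.card_fin, Polynomial.coeff_zero_eq_eval_zero] at h1
  have h2 : Polynomial.eval 0 (∏ m : Fin n,
      ((X - C (Complex.I * (ε m : ℂ))) * (X + C (Complex.I * (ε m : ℂ))))) =
      ∏ m : Fin n, ((ε m : ℂ))^2 := by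
    rw [Polynomial.eval_prod]
    refine Finset.prod_congr rfl fun m _ => ?_
    simp only [Polynomial.eval_mul, Polynomial.eval_sub, Polynomial.eval_add,
      Polynomial.eval_X, Polynomial.eval_C]
    ring_nf
    rw [Complex.I_sq]
    ring
  rw [h2] at h1
  have h3 : ((S * Jblock n).map (Complex.ofReal)).det = ((S * Jblock n).det : ℂ) := by
    exact (RingHom.map_det Complex.ofRealHom _).symm
  rw [h3, Matrix.det_mul, det_Jblock, mul_one] at h1
  have h4 : ((S.det : ℂ)) = ((∏ m : Fin n, (ε m)^2 : ℝ) : ℂ) := by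
    rw [h1]; push_cast; norm_num
  exact_mod_cast h4

end Aux

/-- The product of the projected emittances is at least the product of the
eigenemittances (a symplectic analogue of Hadamard's inequality). -/
theorem stmt15 (n : ℕ) (S : Matrix (Fin (2 * n)) (Fin (2 * n)) ℝ) (ε : Fin n → ℝ)
    (hS : S.PosDef) (hpos : ∀ m, 0 < ε m) (hε : hasEigenemittances S ε) :
    ∏ m : Fin n, ε m ≤ ∏ m : Fin n, Real.sqrt (blk S m m).det := by
  have hdetS : S.det = ∏ m : Fin n, (ε m) ^ 2 := det_eq_of_eigen hε
  have hfis : S.det ≤ ∏ m : Fin n, (blk S m m).det := fischer' n S hS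
  have hblknn : ∀ m : Fin n, 0 ≤ (blk S m m).det := by
    intro m
    have hsub : (blk S m m) = S.submatrix
        (fun i : Fin 2 => (⟨2 * m.val + i.val, by have := m.isLt; have := i.isLt; omega⟩ :
          Fin (2 * n)))
        (fun i : Fin 2 => (⟨2 * m.val + i.val, by have := m.isLt; have := i.isLt; omega⟩ :
          Fin (2 * n))) := rfl
    rw [hsub]
    exact psd_det_nonneg' (hS.posSemidef.submatrix _)
  set c := ∏ m : Fin n, Real.sqrt (blk S m m).det with hc
  have hcnn : 0 ≤ c := Finset.prod_nonneg fun m _ => Real.sqrt_nonneg _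
  have hc2 : c ^ 2 = ∏ m : Fin n, (blk S m m).det := by
    rw [hc, ← Finset.prod_pow]
    exact Finset.prod_congr rfl fun m _ => Real.sq_sqrt (hblknn m)
  have ha : 0 ≤ ∏ m : Fin n, ε m := Finset.prod_nonneg fun m _ => (hpos m).le
  have hsq : (∏ m : Fin n, ε m) ^ 2 ≤ c ^ 2 := by
    rw [← Finset.prod_pow, hc2]
    calc (∏ m : Fin n, (ε m) ^ 2) = S.det := hdetS.symm
    _ ≤ ∏ m : Fin n, (blk S m m).det := hfis
  exact (pow_le_pow_iff_left₀ ha hcnn (by norm_num)).mp hsq
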